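/- Let c ∈ (0, 1] and define f : {L ∈ ℝ : L ≠ 1} → ℝ by f(L) = (1/2)(√((p(L))² + 4c) − p(L)), where p(L) = ((1 + L)/(1 − L))(1 − c). Then f is differentiable at every L ≠ 1 and its derivative satisfies |f'(L)| ≤ 2(1 − c)/(1 − L)². -/

import Mathlib

/-- Stability estimate (4.11): the positive root `λ⁽¹⁾` as a function of the data
ratio `L` is differentiable for `L ≠ 1` with `|dλ⁽¹⁾/dL| ≤ 2(1−c)/(1−L)²`. -/
theorem stmt_7 (c : ℝ) (hc : c ∈ Set.Ioc (0 : ℝ) 1)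
    (p f : ℝ → ℝ)
    (hp : ∀ L : ℝ, p L = ((1 + L) / (1 - L)) * (1 - c))
    (hf : ∀ L : ℝ, f L = (1 / 2) * (Real.sqrt ((p L) ^ 2 + 4 * c) - p L)) :
    ∀ L : ℝ, L ≠ 1 →
      DifferentiableAt ℝ f L ∧ |deriv f L| ≤ 2 * (1 - c) / (1 - L) ^ 2 := by
  obtain ⟨hc0, hc1⟩ := hc
  have hpfun : p = fun L : ℝ => ((1 + L) / (1 - L)) * (1 - c) := funext hp
  have hffun : f = fun L : ℝ => (1 / 2) * (Real.sqrt ((p L) ^ 2 + 4 * c) - p L) :=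
    funext hf
  intro L hL
  have h1L : (1 : ℝ) - L ≠ 0 := sub_ne_zero.mpr (Ne.symm hL)
  set P := p L with hPdef
  set p' : ℝ := 2 * (1 - c) / (1 - L) ^ 2 with hp'
  have hsq : P ^ 2 + 4 * c > 0 := by positivity
  have hS : Real.sqrt (P ^ 2 + 4 * c) > 0 := Real.sqrt_pos.mpr hsq
  set S := Real.sqrt (P ^ 2 + 4 * c) with hSdef
  -- derivative of p
  have hpd : HasDerivAt p p' L := by
    rw [hpfun]
    have hnum : HasDerivAt (fun L : ℝ => 1 + L) 1 L := by
      simpa using (hasDerivAt_id L).const_add (1 : ℝ)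
    have hden : HasDerivAt (fun L : ℝ => 1 - L) (-1) L := by
      simpa using (hasDerivAt_id L).const_sub (1 : ℝ)
    have h := (hnum.div hden h1L).mul_const (1 - c)
    refine HasDerivAt.congr_deriv h ?_
    rw [hp']
    ring
  -- derivative of the inside of sqrt
  have hgd : HasDerivAt (fun x => (p x) ^ 2 + 4 * c) (2 * P * p') L := by
    have := (hpd.pow 2).add_const (4 * c)
    simpa [mul_comm, mul_assoc, mul_left_comm] using this
  have hsd : HasDerivAt (fun x => Real.sqrt ((p x) ^ 2 + 4 * c))
      (2 * P * p' / (2 * S)) L := hgd.sqrt (ne_of_gt hsq)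
  have hfd : HasDerivAt f ((1 / 2) * (2 * P * p' / (2 * S) - p')) L := by
    rw [hffun]
    exact (hsd.sub hpd).const_mul (1 / 2)
  refine ⟨hfd.differentiableAt, ?_⟩
  rw [hfd.deriv]
  -- rewrite derivative as (p'/2) * (P/S - 1)
  have hrw : (1 / 2) * (2 * P * p' / (2 * S) - p') = (p' / 2) * (P / S - 1) := by
    field_simp
  rw [hrw]
  have hp'nonneg : 0 ≤ p' := by
    rw [hp']
    have : (0:ℝ) ≤ 1 - c := by linarith
    positivity
  have hPle : |P| ≤ S := by
    rw [hSdef]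
    rw [← Real.sqrt_sq_eq_abs]
    exact Real.sqrt_le_sqrt (by nlinarith)
  have hratio : |P / S - 1| ≤ 2 := by
    have h1 : |P / S| ≤ 1 := by
      rw [abs_div, abs_of_pos hS]
      exact div_le_one_of_le₀ hPle hS.le
    calc |P / S - 1| ≤ |P / S| + |(1:ℝ)| := abs_sub _ _
      _ ≤ 1 + 1 := by simp; linarith [h1]
      _ = 2 := by norm_num
  calc |(p' / 2) * (P / S - 1)| = (p' / 2) * |P / S - 1| := by
        rw [abs_mul, abs_of_nonneg (by linarith)]
      _ ≤ (p' / 2) * 2 := by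
        apply mul_le_mul_of_nonneg_left hratio (by linarith)
      _ = p' := by ring
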